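/- Let X be a digraph on n vertices and suppose X contains a set U of m vertices such that no two vertices of U form a digon (single arcs between vertices of U are allowed). Then the number η⁺(X) of nonnegative eigenvalues of H(X), counted with multiplicity, satisfies η⁺(X) ≥ ⌈m/2⌉, and likewise the number η⁻(X) of nonpositive eigenvalues satisfies η⁻(X) ≥ ⌈m/2⌉. -/

import Mathlib

open Matrix Complex

/-- Hermitian adjacency matrix of a digraph given by its arc relation `E`. -/
def hermAdj {V : Type*} (E : V → V → Prop) [DecidableRel E] : Matrix V V ℂ :=
  fun u v =>
    if E u v ∧ E v u then 1
    else if E u v then Complex.I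
    else if E v u then -Complex.I
    else 0

open Finset in
lemma hermAdj_key {V : Type*} [Fintype V] [DecidableEq V]
    (E : V → V → Prop) [DecidableRel E]
    (hH : (hermAdj E).IsHermitian)
    (U : Finset V) (hU : ∀ x ∈ U, ∀ y ∈ U, ¬ (E x y ∧ E y x))
    (p : V → Prop) [DecidablePred p] (ε : ℝ)
    (hp : ∀ i, ¬ p i → ε * hH.eigenvalues i < 0) :
    U.card ≤ 2 * (Finset.univ.filter p).card := by
  by_contra hlt
  push_neg at hlt
  set Uu : Matrix V V ℂ := (hH.eigenvectorUnitary : Matrix V V ℂ) with hUu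
  set M : Matrix V V ℂ := star Uu with hM
  set P : Finset V := Finset.univ.filter p with hP
  -- the embedding of real vectors supported on U
  set emb : (↥U → ℝ) → (V → ℂ) := fun r v => if h : v ∈ U then (r ⟨v, h⟩ : ℂ) else 0 with hemb
  -- the ℝ-linear map to coordinates on P
  set φ : (↥U → ℝ) →ₗ[ℝ] (↥P → ℂ) :=
    { toFun := fun r i => ∑ u : ↥U, M i.1 u.1 * (r u : ℂ)
      map_add' := by
        intro a b; funext i
        simp [mul_add, Finset.sum_add_distrib]
      map_smul' := by
        intro c a; funext i
        simp only [Pi.smul_apply, smul_eq_mul, Complex.ofReal_mul, RingHom.id_apply,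
          Complex.real_smul, Finset.mul_sum]
        exact Finset.sum_congr rfl fun u _ => by ring } with hφ
  have h1 : Module.finrank ℝ (↥U → ℝ) = U.card := by
    rw [Module.finrank_fintype_fun_eq_card, Fintype.card_coe]
  have h2 : Module.finrank ℝ (↥P → ℂ) = 2 * P.card := by
    rw [Module.finrank_pi_fintype]
    simp [Complex.finrank_real_complex, Fintype.card_coe, mul_comm]
  have hninj : ¬ Function.Injective φ := by
    intro hinj
    have := LinearMap.finrank_le_finrank_of_injective hinj
    rw [h1, h2] at this
    omega
  rw [Function.not_injective_iff] at hninj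
  obtain ⟨a, b, hab, hne⟩ := hninj
  set r : ↥U → ℝ := a - b with hr
  have hr0 : r ≠ 0 := sub_ne_zero.mpr hne
  have hrker : φ r = 0 := by rw [map_sub, hab, sub_self]
  set x : V → ℂ := emb r with hx
  set y : V → ℂ := M *ᵥ x with hy
  -- x is supported on U, real-valued
  have hxU : ∀ v, v ∉ U → x v = 0 := by intro v hv; simp [hx, hemb, hv]
  have hxreal : star x = x := by
    funext v
    by_cases h : v ∈ U <;> simp [hx, hemb, h, Complex.conj_ofReal]
  -- y agrees with φ r on U-sums
  have hyi : ∀ i : V, y i = ∑ u : ↥U, M i u.1 * (r u : ℂ) := by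
    intro i
    simp only [hy, Matrix.mulVec, dotProduct]
    rw [← Finset.sum_subset (Finset.subset_univ U) (by intro v _ hv; simp [hxU v hv])]
    rw [← Finset.sum_attach U (fun v => M i v * x v), Finset.univ_eq_attach]
    refine Finset.sum_congr rfl fun u _ => ?_
    simp [hx, hemb, u.2]
  have hyP : ∀ i, p i → y i = 0 := by
    intro i hi
    have : φ r ⟨i, by simp [hP, hi]⟩ = 0 := by rw [hrker]; rfl
    rw [hyi i]
    exact this
  -- x ≠ 0
  have hx0 : x ≠ 0 := by
    obtain ⟨u0, hu0⟩ := Function.ne_iff.mp hr0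
    intro h
    have : x u0.1 = 0 := by rw [h]; rfl
    rw [hx] at this
    simp only [hemb] at this
    rw [dif_pos u0.2] at this
    simp only [Complex.ofReal_eq_zero] at this
    exact hu0 (by simpa using this)
  -- y ≠ 0
  have hy0 : y ≠ 0 := by
    intro h
    apply hx0
    have : Uu *ᵥ y = x := by
      rw [hy, Matrix.mulVec_mulVec, hM, hUu,
        Matrix.mem_unitaryGroup_iff.mp hH.eigenvectorUnitary.2, Matrix.one_mulVec]
    rw [h, Matrix.mulVec_zero] at this
    exact this.symm
  -- the quadratic form
  set Q : ℂ := star x ⬝ᵥ (hermAdj E *ᵥ x) with hQ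
  -- (a) Q = 0
  have hQexpand : Q = ∑ u, ∑ v, x u * (hermAdj E u v * x v) := by
    rw [hQ, hxreal]
    simp [dotProduct, Matrix.mulVec, Finset.mul_sum]
  have hkey : ∀ u v, x u * (hermAdj E u v * x v) = -(x v * (hermAdj E v u * x u)) := by
    intro u v
    by_cases hu : u ∈ U
    swap
    · simp [hxU u hu]
    by_cases hv : v ∈ U
    swap
    · simp [hxU v hv]
    have h1 := hU u hu v hv
    have h2 := hU v hv u hu
    have : hermAdj E u v = - hermAdj E v u := by
      simp only [hermAdj, if_neg h1, if_neg h2]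
      by_cases e1 : E u v <;> by_cases e2 : E v u
      · exact absurd ⟨e1, e2⟩ h1
      · simp [e1, e2]
      · simp [e1, e2]
      · simp [e1, e2]
    rw [this]; ring
  have hQ0 : Q = 0 := by
    have hQneg : Q = -Q := by
      calc Q = ∑ u, ∑ v, x u * (hermAdj E u v * x v) := hQexpand
        _ = ∑ u, ∑ v, -(x v * (hermAdj E v u * x u)) := by
            exact Finset.sum_congr rfl fun u _ => Finset.sum_congr rfl fun v _ => hkey u v
        _ = -∑ u, ∑ v, x v * (hermAdj E v u * x u) := by
            simp [Finset.sum_neg_distrib]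
        _ = -∑ v, ∑ u, x v * (hermAdj E v u * x u) := by rw [Finset.sum_comm]
        _ = -Q := by rw [hQexpand]
    have : Q + Q = 0 := by nth_rewrite 1 [hQneg]; exact neg_add_cancel Q
    exact add_self_eq_zero.mp this
  -- (b) Q via spectral theorem
  have hvecmul : star x ᵥ* Uu = star y := by
    rw [hy, hM, Matrix.star_mulVec]
    simp [Matrix.star_eq_conjTranspose]
  have hQspec : Q = ∑ i, (hH.eigenvalues i : ℂ) * ((starRingEnd ℂ) (y i) * y i) := by
    rw [hQ]
    conv_lhs => rw [hH.spectral_theorem, Unitary.conjStarAlgAut_apply]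
    rw [← hUu, ← hM, ← Matrix.mulVec_mulVec, ← Matrix.mulVec_mulVec, ← hy,
      Matrix.dotProduct_mulVec, hvecmul]
    simp only [dotProduct, Matrix.mulVec_diagonal, Pi.star_apply]
    refine Finset.sum_congr rfl fun i _ => ?_
    simp only [Function.comp_apply, RCLike.star_def,
      show (RCLike.ofReal : ℝ → ℂ) = Complex.ofReal from rfl]
    ring
  have hQreal : Q = ((∑ i, hH.eigenvalues i * Complex.normSq (y i) : ℝ) : ℂ) := by
    rw [hQspec]
    push_cast
    refine Finset.sum_congr rfl fun i _ => ?_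
    rw [← Complex.normSq_eq_conj_mul_self]
  have hsum0 : (∑ i, hH.eigenvalues i * Complex.normSq (y i)) = 0 := by
    have := hQreal.symm.trans hQ0
    exact_mod_cast this
  -- strict negativity
  obtain ⟨i0, hi0⟩ := Function.ne_iff.mp hy0
  have hi0y : y i0 ≠ 0 := by simpa using hi0
  have hpi0 : ¬ p i0 := fun h => hi0y (hyP i0 h)
  have hstrict : ∑ i, ε * (hH.eigenvalues i * Complex.normSq (y i)) < ∑ _i : V, (0 : ℝ) := by
    apply Finset.sum_lt_sum
    · intro i _
      by_cases hpi : p i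
      · simp [hyP i hpi]
      · have h1 := hp i hpi
        have h2 : (0:ℝ) ≤ Complex.normSq (y i) := Complex.normSq_nonneg _
        have h3 : (ε * hH.eigenvalues i) * Complex.normSq (y i) ≤ 0 :=
          mul_nonpos_of_nonpos_of_nonneg h1.le h2
        linarith [mul_assoc ε (hH.eigenvalues i) (Complex.normSq (y i))]
    · refine ⟨i0, Finset.mem_univ i0, ?_⟩
      have h1 := hp i0 hpi0
      have h2 : (0:ℝ) < Complex.normSq (y i0) := Complex.normSq_pos.mpr hi0y
      have h3 : (ε * hH.eigenvalues i0) * Complex.normSq (y i0) < 0 :=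
        mul_neg_of_neg_of_pos h1 h2
      linarith [mul_assoc ε (hH.eigenvalues i0) (Complex.normSq (y i0))]
  have hfin : (0:ℝ) < 0 := by
    calc (0:ℝ) = ε * ∑ i, hH.eigenvalues i * Complex.normSq (y i) := by
          rw [hsum0, mul_zero]
      _ = ∑ i, ε * (hH.eigenvalues i * Complex.normSq (y i)) := by rw [Finset.mul_sum]
      _ < ∑ _i : V, (0:ℝ) := hstrict
      _ = 0 := by simp
  exact lt_irrefl _ hfin

/-- If a digraph contains a set `U` of `m` vertices no two of which form a digon,
then it has at least `⌈m/2⌉` nonnegative and at least `⌈m/2⌉` nonpositive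
`H`-eigenvalues (counted with multiplicity). -/
theorem stmt2 {V : Type*} [Fintype V] [DecidableEq V]
    (E : V → V → Prop) [DecidableRel E] (hirr : ∀ v, ¬ E v v)
    (hH : (hermAdj E).IsHermitian)
    (U : Finset V) (hU : ∀ x ∈ U, ∀ y ∈ U, ¬ (E x y ∧ E y x)) :
    (U.card + 1) / 2 ≤ (Finset.univ.filter (fun i => 0 ≤ hH.eigenvalues i)).card ∧
    (U.card + 1) / 2 ≤ (Finset.univ.filter (fun i => hH.eigenvalues i ≤ 0)).card := by
  constructor
  · have := hermAdj_key E hH U hU (fun i => 0 ≤ hH.eigenvalues i) 1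
      (fun i hi => by simp only [not_le] at hi; linarith)
    omega
  · have := hermAdj_key E hH U hU (fun i => hH.eigenvalues i ≤ 0) (-1)
      (fun i hi => by simp only [not_le] at hi; linarith)
    omega
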